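/- A symmetric tensor A of order m and dimension n is copositive if and only if no principal sub-tensor of A has a negative H^{++}-eigenvalue, i.e., no principal sub-tensor B of A admits λ < 0 and a strictly positive vector v with B v^{m-1} = λ v^{[m-1]}. -/

import Mathlib

open Finset

/-- `A x^m` for an `m`-order `n`-dimensional tensor `A`. -/
noncomputable def tpow {m n : ℕ} (A : (Fin m → Fin n) → ℝ) (x : Fin n → ℝ) : ℝ :=
  ∑ f : Fin m → Fin n, A f * ∏ k, x (f k)

/-- `A` is symmetric: entries invariant under permutations of indices. -/
def SymT {m n : ℕ} (A : (Fin m → Fin n) → ℝ) : Prop :=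
  ∀ (σ : Equiv.Perm (Fin m)) (f : Fin m → Fin n), A (f ∘ σ) = A f

/-- `A` is copositive. -/
def CoposT {m n : ℕ} (A : (Fin m → Fin n) → ℝ) : Prop :=
  ∀ x : Fin n → ℝ, (∀ i, 0 ≤ x i) → 0 ≤ tpow A x

/-- `A` is strictly copositive. -/
def StrictCoposT {m n : ℕ} (A : (Fin m → Fin n) → ℝ) : Prop :=
  ∀ x : Fin n → ℝ, (∀ i, 0 ≤ x i) → x ≠ 0 → 0 < tpow A x

/-- `(A_S x^{m-1})_i` : the `i`-th component of the contraction of the principal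
sub-tensor of `A` on the index set `S` with `x` taken `m-1` times. -/
noncomputable def tcontr {m n : ℕ} (hm : 0 < m) (A : (Fin m → Fin n) → ℝ)
    (S : Finset (Fin n)) (x : Fin n → ℝ) (i : Fin n) : ℝ :=
  ∑ f ∈ Finset.univ.filter
      (fun f : Fin m → Fin n => f ⟨0, hm⟩ = i ∧ ∀ k, f k ∈ S),
    A f * ∏ k ∈ Finset.univ.erase (⟨0, hm⟩ : Fin m), x (f k)

section aux

variable {m n : ℕ}

lemma tpow_smul (A : (Fin m → Fin n) → ℝ) (c : ℝ) (x : Fin n → ℝ) :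
    tpow A (c • x) = c ^ m * tpow A x := by
  unfold tpow
  rw [Finset.mul_sum]
  refine Finset.sum_congr rfl fun f _ => ?_
  have h : ∏ k, (c • x) (f k) = c ^ m * ∏ k, x (f k) := by
    simp [Finset.prod_mul_distrib, Finset.card_univ]
  rw [h]; ring

lemma tpow_continuous (A : (Fin m → Fin n) → ℝ) : Continuous (tpow A) := by
  unfold tpow
  exact continuous_finset_sum _ fun f _ =>
    continuous_const.mul (continuous_finset_prod _ fun k _ => continuous_apply (f k))

lemma tpow_zero (hm : 0 < m) (A : (Fin m → Fin n) → ℝ) : tpow A (0 : Fin n → ℝ) = 0 := by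
  unfold tpow
  refine Finset.sum_eq_zero fun f _ => ?_
  rw [Finset.prod_eq_zero (Finset.mem_univ (⟨0, hm⟩ : Fin m)) rfl, mul_zero]

lemma tnormalize (hm : 0 < m) (A : (Fin m → Fin n) → ℝ) (y : Fin n → ℝ) (hy : ∀ i, 0 ≤ y i)
    (h : (∑ i, y i ^ m) ≠ 0) :
    ∃ z : Fin n → ℝ, (∀ i, 0 ≤ z i) ∧ (∑ i, z i ^ m = 1) ∧
      tpow A y = (∑ i, y i ^ m) * tpow A z := by
  set t := ∑ i, y i ^ m with htdef
  have htpos : 0 < t :=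
    lt_of_le_of_ne (Finset.sum_nonneg fun i _ => pow_nonneg (hy i) m) (Ne.symm h)
  set c : ℝ := t ^ ((m : ℝ)⁻¹) with hcdef
  have hcpos : 0 < c := Real.rpow_pos_of_pos htpos _
  have hcm : c ^ m = t := Real.rpow_inv_natCast_pow htpos.le hm.ne'
  refine ⟨c⁻¹ • y, fun i => by
      simpa using mul_nonneg (inv_nonneg.2 hcpos.le) (hy i), ?_, ?_⟩
  · have h1 : ∑ i, (c⁻¹ • y) i ^ m = c⁻¹ ^ m * t := by
      rw [htdef, Finset.mul_sum]
      exact Finset.sum_congr rfl fun i _ => by simp [mul_pow]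
    rw [h1, inv_pow, hcm]
    exact inv_mul_cancel₀ h
  · have h2 : y = c • (c⁻¹ • y) := by
      rw [smul_smul, mul_inv_cancel₀ hcpos.ne', one_smul]
    conv_lhs => rw [h2]
    rw [tpow_smul, hcm]

lemma sym_sum (hm : 0 < m) (A : (Fin m → Fin n) → ℝ) (hA : SymT A) (x : Fin n → ℝ)
    (i : Fin n) (k : Fin m) :
    (∑ f : Fin m → Fin n, if f k = i then A f * ∏ k' ∈ univ.erase k, x (f k') else 0)
    = ∑ f : Fin m → Fin n,
        if f ⟨0, hm⟩ = i then A f * ∏ k' ∈ univ.erase (⟨0, hm⟩ : Fin m), x (f k') else 0 := by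
  set k0 : Fin m := ⟨0, hm⟩ with hk0
  set σ : Equiv.Perm (Fin m) := Equiv.swap k0 k with hσ
  refine (Fintype.sum_bijective (fun f : Fin m → Fin n => f ∘ σ)
      ((Equiv.arrowCongr σ (Equiv.refl (Fin n))).symm.bijective) _ _ fun f => ?_).symm
  have hAe : A (f ∘ σ) = A f := hA σ f
  have hck : (f ∘ σ) k = f k0 := by
    simp [hσ, Equiv.swap_apply_right]
  have hprod : ∏ k' ∈ univ.erase k, x ((f ∘ σ) k') = ∏ k' ∈ univ.erase k0, x (f k') := by
    refine Finset.prod_nbij' (fun a => σ a) (fun a => σ a) ?_ ?_ ?_ ?_ ?_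
    · intro a ha
      simp only [Finset.mem_erase, Finset.mem_univ, and_true] at ha ⊢
      intro hcon
      exact ha (σ.injective (hcon.trans (Equiv.swap_apply_right k0 k).symm))
    · intro a ha
      simp only [Finset.mem_erase, Finset.mem_univ, and_true] at ha ⊢
      intro hcon
      exact ha (σ.injective (hcon.trans (Equiv.swap_apply_left k0 k).symm))
    · intro a _; simp [hσ]
    · intro a _; simp [hσ]
    · intro a _; rfl
  show (if f k0 = i then A f * ∏ k' ∈ univ.erase k0, x (f k') else 0)
    = if (f ∘ ⇑σ) k = i then A (f ∘ ⇑σ) * ∏ k' ∈ univ.erase k, x ((f ∘ ⇑σ) k') else 0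
  rw [hck, hAe, hprod]

lemma sym_total (hm : 0 < m) (A : (Fin m → Fin n) → ℝ) (hA : SymT A) (x : Fin n → ℝ)
    (i : Fin n) :
    (∑ f : Fin m → Fin n, A f * ∑ k : Fin m,
        (∏ k' ∈ univ.erase k, x (f k')) * (Pi.single i (1 : ℝ) : Fin n → ℝ) (f k))
    = (m : ℝ) * ∑ f : Fin m → Fin n,
        if f ⟨0, hm⟩ = i then A f * ∏ k' ∈ univ.erase (⟨0, hm⟩ : Fin m), x (f k') else 0 := by
  have step1 : ∀ f : Fin m → Fin n,
      A f * ∑ k : Fin m, (∏ k' ∈ univ.erase k, x (f k')) * (Pi.single i (1 : ℝ) : Fin n → ℝ) (f k)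
      = ∑ k : Fin m, if f k = i then A f * ∏ k' ∈ univ.erase k, x (f k') else 0 := by
    intro f
    rw [Finset.mul_sum]
    refine Finset.sum_congr rfl fun k _ => ?_
    rcases eq_or_ne (f k) i with h | h
    · simp only [Pi.single_apply, if_pos h, mul_one]
    · simp [Pi.single_apply, h]
  simp only [step1]
  rw [Finset.sum_comm]
  rw [Finset.sum_congr rfl fun k _ => sym_sum hm A hA x i k, Finset.sum_const,
    Finset.card_univ, Fintype.card_fin, nsmul_eq_mul]

lemma contract_eq_tcontr (hm : 0 < m) (A : (Fin m → Fin n) → ℝ) (S : Finset (Fin n))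
    (x : Fin n → ℝ) (hx : ∀ j, j ∉ S → x j = 0) (i : Fin n) (hi : i ∈ S) :
    (∑ f : Fin m → Fin n,
      if f ⟨0, hm⟩ = i then A f * ∏ k ∈ univ.erase (⟨0, hm⟩ : Fin m), x (f k) else 0)
    = tcontr hm A S x i := by
  rw [← Finset.sum_filter]
  unfold tcontr
  refine (Finset.sum_subset (Finset.monotone_filter_right _ fun f _ h => h.1) ?_).symm
  intro f hf hf'
  simp only [Finset.mem_filter, Finset.mem_univ, true_and] at hf hf'
  have hnot : ¬ ∀ k, f k ∈ S := fun h => hf' ⟨hf, h⟩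
  push_neg at hnot
  obtain ⟨k, hk⟩ := hnot
  have hk0 : k ≠ ⟨0, hm⟩ := by
    rintro rfl
    exact hk (hf ▸ hi)
  rw [Finset.prod_eq_zero (Finset.mem_erase.2 ⟨hk0, Finset.mem_univ k⟩) (hx _ hk), mul_zero]

lemma hasDerivAt_phi (hm : 0 < m) (A : (Fin m → Fin n) → ℝ) (x : Fin n → ℝ) (lam : ℝ)
    (i : Fin n) :
    HasDerivAt (fun t : ℝ => tpow A (x + t • (Pi.single i 1 : Fin n → ℝ))
        - lam * ∑ j, (x + t • (Pi.single i 1 : Fin n → ℝ)) j ^ m)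
      ((∑ f : Fin m → Fin n, A f * ∑ k : Fin m,
          (∏ k' ∈ univ.erase k, x (f k')) * (Pi.single i (1 : ℝ) : Fin n → ℝ) (f k))
        - lam * ((m : ℝ) * x i ^ (m - 1))) 0 := by
  classical
  set d : Fin n → ℝ := Pi.single i 1 with hd
  have hbase : ∀ j : Fin n, HasDerivAt (fun t : ℝ => x j + t * d j) (d j) 0 := fun j => by
    simpa using ((hasDerivAt_id (0 : ℝ)).mul_const (d j)).const_add (x j)
  have h1 : HasDerivAt (fun t : ℝ => ∑ f : Fin m → Fin n, A f * ∏ k, (x (f k) + t * d (f k)))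
      (∑ f : Fin m → Fin n, A f * ∑ k : Fin m,
        (∏ k' ∈ univ.erase k, x (f k')) * d (f k)) 0 := by
    refine HasDerivAt.fun_sum fun f _ => ?_
    have hp := HasDerivAt.fun_finsetProd (u := (univ : Finset (Fin m)))
      (f := fun k t => x (f k) + t * d (f k)) (f' := fun k => d (f k))
      (fun k _ => hbase (f k))
    have h2 := hp.const_mul (A f)
    convert h2 using 1
    · rfl
    simp [smul_eq_mul]
  have h3 : HasDerivAt (fun t : ℝ => ∑ j, (x j + t * d j) ^ m)
      ((m : ℝ) * x i ^ (m - 1)) 0 := by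
    have hs := HasDerivAt.fun_sum (u := (univ : Finset (Fin n))) fun j _ => (hbase j).pow m
    convert hs using 1
    · rfl
    · rfl
    · rfl
    simp only [zero_mul, add_zero]
    rw [Finset.sum_congr rfl fun j _ => by
      rw [hd, Pi.single_apply, mul_ite, mul_one, mul_zero]]
    rw [Finset.sum_ite_eq' univ i (fun j => (m : ℝ) * x j ^ (m - 1)), if_pos (Finset.mem_univ i)]
  have h4 := h1.sub (h3.const_mul lam)
  have hfun : (fun t : ℝ => tpow A (x + t • d) - lam * ∑ j, (x + t • d) j ^ m)
      = fun t : ℝ => (∑ f : Fin m → Fin n, A f * ∏ k, (x (f k) + t * d (f k)))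
          - lam * ∑ j, (x j + t * d j) ^ m := by
    funext t
    simp only [tpow, Pi.add_apply, Pi.smul_apply, smul_eq_mul]
  rw [hfun]
  exact h4

end aux

theorem stmt7 {m n : ℕ} (hm : 0 < m) (A : (Fin m → Fin n) → ℝ) (hA : SymT A) :
    CoposT A ↔
      ¬ ∃ (S : Finset (Fin n)) (lam : ℝ) (v : Fin n → ℝ),
        S.Nonempty ∧ lam < 0 ∧ (∀ i ∈ S, 0 < v i) ∧
        ∀ i ∈ S, tcontr hm A S v i = lam * v i ^ (m - 1) := by
  classical
  have hm1 : m - 1 + 1 = m := Nat.succ_pred_eq_of_pos hm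
  constructor
  · intro hco
    rintro ⟨S, lam, v, hSne, hlam, hv, heig⟩
    set k0 : Fin m := ⟨0, hm⟩ with hk0
    set w : Fin n → ℝ := fun j => if j ∈ S then v j else 0 with hw
    have hw0 : ∀ j, 0 ≤ w j := by
      intro j
      show 0 ≤ if j ∈ S then v j else 0
      split_ifs with h
      · exact (hv j h).le
      · exact le_rfl
    have hwS : ∀ j, j ∉ S → w j = 0 := fun j h => by
      show (if j ∈ S then v j else 0) = 0
      rw [if_neg h]
    have hcal : tpow A w = ∑ i ∈ S, v i * tcontr hm A S v i := by
      unfold tpow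
      have expand : ∀ f : Fin m → Fin n,
          A f * ∏ k, w (f k) = ∑ i : Fin n, if f k0 = i then A f * ∏ k, w (f k) else 0 := by
        intro f
        rw [Finset.sum_ite_eq univ (f k0)]
        simp
      rw [Finset.sum_congr rfl fun f _ => expand f, Finset.sum_comm]
      have hz : ∀ i ∈ (univ : Finset (Fin n)), i ∉ S →
          (∑ f : Fin m → Fin n, if f k0 = i then A f * ∏ k, w (f k) else 0) = 0 := by
        intro i _ hiS
        refine Finset.sum_eq_zero fun f _ => ?_
        rcases eq_or_ne (f k0) i with h | h
        · rw [if_pos h, Finset.prod_eq_zero (Finset.mem_univ k0) (by rw [h]; exact hwS i hiS),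
            mul_zero]
        · rw [if_neg h]
      rw [← Finset.sum_subset (Finset.subset_univ S) hz]
      refine Finset.sum_congr rfl fun i hi => ?_
      have hterm : ∀ f : Fin m → Fin n,
          (if f k0 = i then A f * ∏ k, w (f k) else 0)
          = v i * (if f k0 = i then A f * ∏ k ∈ univ.erase k0, w (f k) else 0) := by
        intro f
        rcases eq_or_ne (f k0) i with h | h
        · rw [if_pos h, if_pos h, ← Finset.mul_prod_erase univ _ (Finset.mem_univ k0), h]
          have hwi : w i = v i := by
            show (if i ∈ S then v i else 0) = v i
            rw [if_pos hi]
          rw [hwi]; ring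
        · simp [h]
      rw [Finset.sum_congr rfl fun f _ => hterm f, ← Finset.mul_sum]
      congr 1
      rw [contract_eq_tcontr hm A S w hwS i hi]
      unfold tcontr
      refine Finset.sum_congr rfl fun f hf => ?_
      simp only [Finset.mem_filter] at hf
      congr 1
      refine Finset.prod_congr rfl fun k _ => ?_
      show (if f k ∈ S then v (f k) else 0) = v (f k)
      rw [if_pos (hf.2.2 k)]
    have hbad : tpow A w < 0 := by
      rw [hcal]
      have hre : ∑ i ∈ S, v i * tcontr hm A S v i = lam * ∑ i ∈ S, v i ^ m := by
        rw [Finset.mul_sum]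
        refine Finset.sum_congr rfl fun i hi => ?_
        rw [heig i hi]
        have : v i ^ m = v i ^ (m - 1) * v i := by rw [← pow_succ, hm1]
        rw [this]; ring
      rw [hre]
      exact mul_neg_of_neg_of_pos hlam
        (Finset.sum_pos (fun i hi => pow_pos (hv i hi) m) hSne)
    exact absurd (hco w hw0) (not_le.2 hbad)
  · intro hno
    by_contra hco
    unfold CoposT at hco
    push_neg at hco
    obtain ⟨x₀, hx₀, hx₀neg⟩ := hco
    set K : Set (Fin n → ℝ) := {x | (∀ i, 0 ≤ x i) ∧ ∑ i, x i ^ m = 1} with hK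
    have hKclosed : IsClosed K := by
      have h1 : IsClosed {x : Fin n → ℝ | ∀ i, 0 ≤ x i} := by
        have he : {x : Fin n → ℝ | ∀ i, 0 ≤ x i} = ⋂ i, {x | 0 ≤ x i} := by
          ext x; simp
        rw [he]
        exact isClosed_iInter fun i => isClosed_le continuous_const (continuous_apply i)
      have h2 : IsClosed {x : Fin n → ℝ | ∑ i, x i ^ m = 1} :=
        isClosed_eq (continuous_finset_sum _ fun i _ => (continuous_apply i).pow m)
          continuous_const
      exact h1.inter h2
    have hKbdd : Bornology.IsBounded K := by
      rw [isBounded_iff_forall_norm_le]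
      refine ⟨1, fun x hx => ?_⟩
      rw [pi_norm_le_iff_of_nonneg zero_le_one]
      intro j
      rw [Real.norm_eq_abs, abs_of_nonneg (hx.1 j)]
      have h1 : x j ^ m ≤ 1 := by
        rw [← hx.2]
        exact Finset.single_le_sum (fun i _ => pow_nonneg (hx.1 i) m) (Finset.mem_univ j)
      exact (pow_le_one_iff_of_nonneg (hx.1 j) hm.ne').mp h1
    have hx₀ne : (∑ i, x₀ i ^ m) ≠ 0 := by
      intro h
      have hz : x₀ = 0 := by
        funext i
        exact (pow_eq_zero_iff hm.ne').mp
          ((Finset.sum_eq_zero_iff_of_nonneg fun i _ => pow_nonneg (hx₀ i) m).mp h i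
            (Finset.mem_univ i))
      rw [hz, tpow_zero hm A] at hx₀neg
      exact lt_irrefl 0 hx₀neg
    obtain ⟨z₀, hz₀nn, hz₀sum, hz₀val⟩ := tnormalize hm A x₀ hx₀ hx₀ne
    have hKne : K.Nonempty := ⟨z₀, hz₀nn, hz₀sum⟩
    obtain ⟨xs, hxsK, hminOn⟩ :=
      (Metric.isCompact_of_isClosed_isBounded hKclosed hKbdd).exists_isMinOn hKne
        (tpow_continuous A).continuousOn
    set lam := tpow A xs with hlamdef
    have hminK : ∀ y ∈ K, lam ≤ tpow A y := fun y hy => hminOn hy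
    have ht₀pos : 0 < ∑ i, x₀ i ^ m :=
      lt_of_le_of_ne (Finset.sum_nonneg fun i _ => pow_nonneg (hx₀ i) m) (Ne.symm hx₀ne)
    have hlamneg : lam < 0 := by
      have h1 : lam ≤ tpow A z₀ := hminK z₀ ⟨hz₀nn, hz₀sum⟩
      have h2 : tpow A z₀ < 0 := by
        by_contra hcon
        push_neg at hcon
        have := mul_nonneg ht₀pos.le hcon
        rw [← hz₀val] at this
        exact absurd hx₀neg (not_lt.2 this)
      exact lt_of_le_of_lt h1 h2
    have hkey : ∀ y : Fin n → ℝ, (∀ i, 0 ≤ y i) → lam * ∑ i, y i ^ m ≤ tpow A y := by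
      intro y hy
      rcases eq_or_ne (∑ i, y i ^ m) 0 with h | h
      · have hy0 : y = 0 := by
          funext i
          exact (pow_eq_zero_iff hm.ne').mp
            ((Finset.sum_eq_zero_iff_of_nonneg fun i _ => pow_nonneg (hy i) m).mp h i
              (Finset.mem_univ i))
        rw [h, hy0, tpow_zero hm A, mul_zero]
      · obtain ⟨z, hznn, hzsum, hzval⟩ := tnormalize hm A y hy h
        have hpos : 0 < ∑ i, y i ^ m :=
          lt_of_le_of_ne (Finset.sum_nonneg fun i _ => pow_nonneg (hy i) m) (Ne.symm h)
        rw [hzval, mul_comm lam]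
        exact mul_le_mul_of_nonneg_left (hminK z ⟨hznn, hzsum⟩) hpos.le
    set S : Finset (Fin n) := univ.filter (fun i => 0 < xs i) with hSdef
    have hxsnn := hxsK.1
    have hxsS : ∀ j, j ∉ S → xs j = 0 := by
      intro j hj
      have hnlt : ¬ 0 < xs j := by simpa [hSdef] using hj
      exact le_antisymm (not_lt.1 hnlt) (hxsnn j)
    have hSne : S.Nonempty := by
      rw [Finset.nonempty_iff_ne_empty]
      intro h
      have hall : ∀ i, xs i = 0 := fun i => hxsS i (by simp [h])
      have h2 : ∑ i, xs i ^ m = 0 :=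
        Finset.sum_eq_zero fun i _ => by rw [hall i]; exact zero_pow hm.ne'
      rw [hxsK.2] at h2
      norm_num at h2
    refine hno ⟨S, lam, xs, hSne, hlamneg, fun i hi => (Finset.mem_filter.1 hi).2, ?_⟩
    intro i hi
    have hxsi : 0 < xs i := (Finset.mem_filter.1 hi).2
    set φ : ℝ → ℝ := fun t => tpow A (xs + t • (Pi.single i 1 : Fin n → ℝ))
        - lam * ∑ j, (xs + t • (Pi.single i 1 : Fin n → ℝ)) j ^ m with hφ
    have hφ0 : φ 0 = 0 := by
      simp [hφ, hxsK.2, hlamdef]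
    have hloc : IsLocalMin φ 0 := by
      have hball : Metric.ball (0 : ℝ) (xs i) ∈ nhds (0 : ℝ) := Metric.ball_mem_nhds _ hxsi
      filter_upwards [hball] with t ht
      rw [hφ0]
      have habs : |t| < xs i := by
        simpa [Real.dist_eq] using ht
      have hynn : ∀ j, 0 ≤ (xs + t • (Pi.single i 1 : Fin n → ℝ)) j := by
        intro j
        rcases eq_or_ne j i with rfl | hne
        · simp only [Pi.add_apply, Pi.smul_apply, Pi.single_eq_same, smul_eq_mul, mul_one]
          linarith [neg_abs_le t]
        · simp [Pi.single_eq_of_ne hne, hxsnn j]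
      have hky := hkey _ hynn
      simp only [hφ]
      linarith
    have hD := hloc.hasDerivAt_eq_zero (hasDerivAt_phi hm A xs lam i)
    rw [sym_total hm A hA xs i, contract_eq_tcontr hm A S xs hxsS i hi] at hD
    have h' : (m : ℝ) * tcontr hm A S xs i = lam * ((m : ℝ) * xs i ^ (m - 1)) := by
      linarith
    have h'' : (m : ℝ) * tcontr hm A S xs i = (m : ℝ) * (lam * xs i ^ (m - 1)) := by
      rw [h']; ring
    exact mul_left_cancel₀ (Nat.cast_ne_zero.2 hm.ne' : (m : ℝ) ≠ 0) h''
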